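/- Let G and H be finite groups and let (X,Y) be an orthogonal pair of finite bifree (G,H)-bisets. Then for each subgroup R ≤ G there exists a twisted diagonal subgroup Δ(R,α,S) ≤ G×H (with S ≤ H and α : S → R an isomorphism) such that |X^{Δ(R,α,S)}| ≠ |Y^{Δ(R,α,S)}|; any two such twisted diagonal subgroups with first component R are conjugate by an element of {1}×H; and for any such subgroup one has | |X^{Δ(R,α,S)}| − |Y^{Δ(R,α,S)}| | = |C_G(R)| = |C_H(S)| and N_{α⁻¹} = N_G(R), where N_{α⁻¹} := {g ∈ N_G(R) : ∃ h ∈ N_H(S) with α∘c_h = c_g∘α on S}. -/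

import Mathlib

open MulAction

/-- An isomorphism of `M`-sets: an equivariant bijection. -/
def IsoAsGSets (M X Y : Type*) [SMul M X] [SMul M Y] : Prop :=
  ∃ e : X ≃ Y, ∀ (m : M) (x : X), e (m • x) = m • e x

/-- The twisted diagonal subgroup `Δ(R,α,S) = {(α s, s) | s ∈ S}` of `G × H`,
for an isomorphism `α : S ≃* R`. -/
def twistedDiagonal {G H : Type*} [Group G] [Group H] (R : Subgroup G) (S : Subgroup H)
    (α : S ≃* R) : Subgroup (G × H) :=
  ((R.subtype.comp α.toMonoidHom).prod S.subtype).range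

/-- `Δ(G,φ,H) = {(φ h, h) | h ∈ H} ≤ G × H` for an isomorphism `φ : H ≃* G`. -/
def fullTwistedDiagonal {G H : Type*} [Group G] [Group H] (φ : H ≃* G) : Subgroup (G × H) :=
  (φ.toMonoidHom.prod (MonoidHom.id H)).range

/-- The diagonal subgroup `Δ(R) = {(r,r) | r ∈ R} ≤ G × G`. -/
def diagSubgroup {G : Type*} [Group G] (R : Subgroup G) : Subgroup (G × G) :=
  (R.subtype.prod R.subtype).range

/-- A `(G,H)`-biset (i.e. a left `(G × H)`-set) is bifree if it is free as a left `G`-set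
and free as a right `H`-set. -/
def IsBifree (G H X : Type*) [Group G] [Group H] [MulAction (G × H) X] : Prop :=
  (∀ (g : G) (x : X), (g, (1 : H)) • x = x → g = 1) ∧
  (∀ (h : H) (x : X), ((1 : G), h) • x = x → h = 1)

section Tensor

variable (G H K : Type*) [Group G] [Group H] [Group K]
variable (X Y : Type*) [MulAction (G × H) X] [MulAction (H × K) Y]

/-- The relation on `X × Y` identifying `(x·h, y)` with `(x, h·y)`. -/
def bisetSetoid : Setoid (X × Y) where
  r p q := ∃ h : H, q.1 = ((1 : G), h) • p.1 ∧ q.2 = (h, (1 : K)) • p.2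
  iseqv := by
    constructor
    · intro p
      exact ⟨1, by simp [Prod.mk_one_one], by simp [Prod.mk_one_one]⟩
    · rintro p q ⟨h, h1, h2⟩
      exact ⟨h⁻¹, by simp [h1, smul_smul, Prod.mk_one_one], by simp [h2, smul_smul, Prod.mk_one_one]⟩
    · rintro p q r ⟨h, h1, h2⟩ ⟨h', h1', h2'⟩
      exact ⟨h' * h, by simp [h1, h1', smul_smul], by simp [h2, h2', smul_smul]⟩

/-- The tensor product `X ×_H Y` of a `(G,H)`-biset and an `(H,K)`-biset;
a `(G,K)`-biset. -/
def BisetTensor : Type _ :=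
  Quotient (bisetSetoid G H K X Y)

variable {G H K X Y}

/-- The class of `(x, y)` in `X ×_H Y`. -/
def BisetTensor.mk (p : X × Y) : BisetTensor G H K X Y :=
  Quotient.mk (bisetSetoid G H K X Y) p

variable (G H K X Y)

instance : SMul (G × K) (BisetTensor G H K X Y) :=
  ⟨fun a => Quotient.map (fun p => ((a.1, (1 : H)) • p.1, ((1 : H), a.2) • p.2))
    (by
      rintro p q ⟨h, h1, h2⟩
      exact ⟨h, by simp [h1, smul_smul], by simp [h2, smul_smul]⟩)⟩

variable {G H K X Y}

theorem BisetTensor.smul_mk (a : G × K) (p : X × Y) :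
    a • (BisetTensor.mk p : BisetTensor G H K X Y) =
      BisetTensor.mk ((a.1, (1 : H)) • p.1, ((1 : H), a.2) • p.2) :=
  rfl

variable (G H K X Y)

instance : MulAction (G × K) (BisetTensor G H K X Y) where
  one_smul q := Quotient.inductionOn q fun p => by
    refine Quotient.sound ⟨1, ?_, ?_⟩ <;> simp [Prod.mk_one_one]
  mul_smul a b q := Quotient.inductionOn q fun p => by
    refine Quotient.sound ⟨1, ?_, ?_⟩ <;> simp [smul_smul, Prod.mk_one_one]

end Tensor

section Op

/-- The opposite biset: a `(G,H)`-biset viewed as an `(H,G)`-biset via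
`h · x · g := g⁻¹ · x · h⁻¹`. -/
def BisetOp (H G X : Type*) : Type _ := (fun _ _ => X) H G

instance BisetOp.instMulAction {G H : Type*} [Group G] [Group H] (X : Type*)
    [MulAction (G × H) X] : MulAction (H × G) (BisetOp H G X) :=
  MulAction.compHom X (MulEquiv.prodComm : H × G ≃* G × H).toMonoidHom

instance BisetOp.instFinite {G H : Type*} (X : Type*) [Finite X] : Finite (BisetOp H G X) :=
  inferInstanceAs (Finite X)

end Op

section Grp

/-- The group `G` viewed as a `(G,G)`-biset via left and right multiplication. -/
structure BisetGrp (G : Type*) where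
  /-- the underlying group element -/
  val : G

instance BisetGrp.instSMul {G : Type*} [Group G] : SMul (G × G) (BisetGrp G) :=
  ⟨fun p x => ⟨p.1 * x.val * p.2⁻¹⟩⟩

theorem BisetGrp.smul_def {G : Type*} [Group G] (p : G × G) (x : BisetGrp G) :
    p • x = ⟨p.1 * x.val * p.2⁻¹⟩ := rfl

instance BisetGrp.instMulAction {G : Type*} [Group G] : MulAction (G × G) (BisetGrp G) where
  one_smul x := by
    cases x
    simp [BisetGrp.smul_def]
  mul_smul p q x := by
    cases x
    simp [BisetGrp.smul_def, mul_assoc]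

instance BisetGrp.instFinite {G : Type*} [Finite G] : Finite (BisetGrp G) :=
  Finite.of_equiv G ⟨fun g => ⟨g⟩, fun x => x.val, fun _ => rfl, fun _ => rfl⟩

end Grp

/-- A pair `(X,Y)` of `(G,H)`-bisets is an orthogonal pair if
`(X ×_H X°) ⊔ (Y ×_H Y°) ≅ G ⊔ (X ×_H Y°) ⊔ (Y ×_H X°)` as `(G,G)`-bisets;
this encodes the equation `([X] - [Y]) ·_H ([X] - [Y])° = [G]` in `B^Δ(G,G)`. -/
def IsOrthogonalPair (G H : Type*) [Group G] [Group H] (X Y : Type*)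
    [MulAction (G × H) X] [MulAction (G × H) Y] : Prop :=
  IsoAsGSets (G × G)
    (BisetTensor G H G X (BisetOp H G X) ⊕ BisetTensor G H G Y (BisetOp H G Y))
    (BisetGrp G ⊕ (BisetTensor G H G X (BisetOp H G Y) ⊕ BisetTensor G H G Y (BisetOp H G X)))

section Iota

/-- For a `G`-set `Z`, the `(G,G)`-biset `ι(Z) = G × Z` with action
`(g₁,g₂) • (g,z) = (g₁ g g₂⁻¹, g₂ • z)`. -/
structure IotaBiset (G Z : Type*) where
  /-- the group component -/
  fst : G
  /-- the `G`-set component -/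
  snd : Z

instance IotaBiset.instSMul {G Z : Type*} [Group G] [MulAction G Z] :
    SMul (G × G) (IotaBiset G Z) :=
  ⟨fun p x => ⟨p.1 * x.fst * p.2⁻¹, p.2 • x.snd⟩⟩

theorem IotaBiset.smul_def {G Z : Type*} [Group G] [MulAction G Z] (p : G × G)
    (x : IotaBiset G Z) : p • x = ⟨p.1 * x.fst * p.2⁻¹, p.2 • x.snd⟩ := rfl

instance IotaBiset.instMulAction {G Z : Type*} [Group G] [MulAction G Z] :
    MulAction (G × G) (IotaBiset G Z) where
  one_smul x := by
    cases x
    simp [IotaBiset.smul_def]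
  mul_smul p q x := by
    cases x
    simp [IotaBiset.smul_def, mul_assoc, mul_smul]

instance IotaBiset.instFinite {G Z : Type*} [Finite G] [Finite Z] : Finite (IotaBiset G Z) :=
  Finite.of_equiv (G × Z) ⟨fun p => ⟨p.1, p.2⟩, fun x => (x.fst, x.snd), fun _ => rfl,
    fun _ => rfl⟩

end Iota

/-- `N_{α⁻¹} = {g ∈ N_G(R) : ∃ h ∈ N_H(S), α ∘ c_h = c_g ∘ α on S}`. -/
def NsetAlphaInv {G H : Type*} [Group G] [Group H] (R : Subgroup G) (S : Subgroup H)
    (α : S ≃* R) : Set G :=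
  {g | g ∈ Subgroup.normalizer (R : Set G) ∧ ∃ h ∈ Subgroup.normalizer (S : Set H),
    ∀ s t : S, (t : H) = h * (s : H) * h⁻¹ → (α t : G) = g * (α s : G) * g⁻¹}

open MulAction Subgroup

section FreeCount

variable (M X : Type*) [Group M] [MulAction M X] [Finite M] [Finite X]

theorem orbit_card_of_free (hfree : ∀ (m : M) (x : X), m • x = x → m = 1) (b : X) :
    Nat.card (orbit M b) = Nat.card M := by
  have hstab : stabilizer M b = ⊥ := by
    ext m
    simp only [mem_stabilizer_iff, Subgroup.mem_bot]
    exact ⟨hfree m b, fun h => by subst h; exact one_smul M b⟩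
  calc Nat.card (orbit M b) = Nat.card (M ⧸ stabilizer M b) :=
        Nat.card_congr (orbitEquivQuotientStabilizer M b)
    _ = Nat.card M := by rw [hstab]; exact Nat.card_congr (QuotientGroup.quotientBot (G := M)).toEquiv

theorem card_of_free (hfree : ∀ (m : M) (x : X), m • x = x → m = 1) :
    Nat.card X = Nat.card (orbitRel.Quotient M X) * Nat.card M := by
  classical
  haveI := Fintype.ofFinite X
  haveI : Fintype (orbitRel.Quotient M X) := Fintype.ofFinite _
  haveI : ∀ ω : orbitRel.Quotient M X, Fintype (orbit M ω.out) := fun _ => Fintype.ofFinite _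
  rw [Nat.card_congr (selfEquivSigmaOrbits M X)]
  rw [Nat.card_eq_fintype_card, Fintype.card_sigma, Nat.card_eq_fintype_card]
  rw [Finset.sum_congr rfl (fun ω _ => ?_), Finset.sum_const, Finset.card_univ, smul_eq_mul]
  rw [← Nat.card_eq_fintype_card, orbit_card_of_free M X hfree]

theorem card_group_dvd_card_of_free (hfree : ∀ (m : M) (x : X), m • x = x → m = 1) :
    Nat.card M ∣ Nat.card X :=
  ⟨Nat.card (orbitRel.Quotient M X), by rw [card_of_free M X hfree, Nat.mul_comm]⟩

end FreeCount
section B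

variable {G H : Type*} [Group G] [Group H]

/-- `D ≤ G × H` is a twisted diagonal subgroup over `R`. -/
def IsTD (R : Subgroup G) (D : Subgroup (G × H)) : Prop :=
  D.map (MonoidHom.fst G H) = R ∧
  (∀ p ∈ D, p.1 = 1 → p.2 = 1) ∧
  (∀ p ∈ D, p.2 = 1 → p.1 = 1)

theorem mem_tD {R : Subgroup G} {S : Subgroup H} {α : S ≃* R} {p : G × H} :
    p ∈ twistedDiagonal R S α ↔ ∃ s : S, p = ((α s : G), (s : H)) := by
  constructor
  · rintro ⟨s, rfl⟩; exact ⟨s, rfl⟩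
  · rintro ⟨s, rfl⟩; exact ⟨s, rfl⟩

theorem isTD_twistedDiagonal (R : Subgroup G) (S : Subgroup H) (α : S ≃* R) :
    IsTD R (twistedDiagonal R S α) := by
  refine ⟨?_, ?_, ?_⟩
  · ext g
    constructor
    · rintro ⟨p, hp, rfl⟩
      obtain ⟨s, rfl⟩ := mem_tD.1 hp
      exact (α s).2
    · intro hg
      exact ⟨((α.symm ⟨g, hg⟩ : S) : H) |> fun s => ((g, s) : G × H), by
        · exact mem_tD.2 ⟨α.symm ⟨g, hg⟩, by simp⟩, rfl⟩
  · rintro p hp h1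
    obtain ⟨s, rfl⟩ := mem_tD.1 hp
    have : α s = 1 := by ext; simpa using h1
    have hs : s = 1 := by simpa using congrArg α.symm this
    simp [hs]
  · rintro p hp h1
    obtain ⟨s, rfl⟩ := mem_tD.1 hp
    have hs : s = 1 := by ext; simpa using h1
    simp [hs]

theorem map_snd_twistedDiagonal (R : Subgroup G) (S : Subgroup H) (α : S ≃* R) :
    (twistedDiagonal R S α).map (MonoidHom.snd G H) = S := by
  ext h
  constructor
  · rintro ⟨p, hp, rfl⟩
    obtain ⟨s, rfl⟩ := mem_tD.1 hp
    exact s.2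
  · intro hs
    exact ⟨((α ⟨h, hs⟩ : G), h), mem_tD.2 ⟨⟨h, hs⟩, rfl⟩, rfl⟩

namespace IsTD

variable {R : Subgroup G} {D : Subgroup (G × H)} (hD : IsTD R D)

include hD

theorem right_unique {g g' : G} {h : H} (h1 : (g, h) ∈ D) (h2 : (g', h) ∈ D) : g = g' := by
  have hm : ((g, h) * (g', h)⁻¹) ∈ D := mul_mem h1 (inv_mem h2)
  have : (g * g'⁻¹, (1 : H)) ∈ D := by simpa using hm
  have := hD.2.2 _ this rfl
  exact mul_inv_eq_one.1 this

theorem left_unique {g : G} {h h' : H} (h1 : (g, h) ∈ D) (h2 : (g, h') ∈ D) : h = h' := by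
  have hm : ((g, h) * (g, h')⁻¹) ∈ D := mul_mem h1 (inv_mem h2)
  have : ((1 : G), h * h'⁻¹) ∈ D := by simpa using hm
  have := hD.2.1 _ this rfl
  exact mul_inv_eq_one.1 this

theorem fst_mem {p : G × H} (hp : p ∈ D) : p.1 ∈ R := hD.1 ▸ ⟨p, hp, rfl⟩

theorem exists_right {g : G} (hg : g ∈ R) : ∃ h : H, (g, h) ∈ D := by
  rw [← hD.1] at hg
  obtain ⟨p, hp, rfl⟩ := hg
  exact ⟨p.2, hp⟩

/-- a twisted diagonal subgroup is `twistedDiagonal R S α` for some `S`, `α`. -/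
theorem exists_repr : ∃ (S : Subgroup H) (α : S ≃* R), twistedDiagonal R S α = D := by
  classical
  set S := D.map (MonoidHom.snd G H) with hS
  have hex : ∀ s : S, ∃ g : G, (g, (s : H)) ∈ D := by
    rintro ⟨s, hs⟩
    obtain ⟨p, hp, rfl⟩ := hs
    exact ⟨p.1, hp⟩
  have hmem : ∀ s : S, ((hex s).choose, (s : H)) ∈ D := fun s => (hex s).choose_spec
  have hmemR : ∀ s : S, (hex s).choose ∈ R := fun s => hD.fst_mem (hmem s)
  have hmul : ∀ s t : S, (hex (s * t)).choose = (hex s).choose * (hex t).choose := by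
    intro s t
    refine hD.right_unique (hmem (s * t)) ?_
    have := mul_mem (hmem s) (hmem t)
    simpa using this
  let f : S →* R := MonoidHom.mk' (fun s => ⟨(hex s).choose, hmemR s⟩)
    (fun s t => Subtype.ext (hmul s t))
  have hinj : Function.Injective f := by
    intro s t hst
    have h1 : ((hex s).choose, (s : H)) ∈ D := hmem s
    have h2 : ((hex s).choose, (t : H)) ∈ D := by
      have := hmem t
      rwa [show (hex t).choose = (hex s).choose from congrArg Subtype.val hst.symm] at this
    exact Subtype.ext (hD.left_unique h1 h2)
  have hsurj : Function.Surjective f := by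
    rintro ⟨r, hr⟩
    obtain ⟨h, hh⟩ := hD.exists_right hr
    have hhS : h ∈ S := ⟨(r, h), hh, rfl⟩
    refine ⟨⟨h, hhS⟩, Subtype.ext ?_⟩
    exact hD.right_unique (hmem ⟨h, hhS⟩) hh
  refine ⟨S, MulEquiv.ofBijective f ⟨hinj, hsurj⟩, ?_⟩
  ext p
  rw [mem_tD]
  constructor
  · rintro ⟨s, rfl⟩
    exact hmem s
  · intro hp
    have hpS : p.2 ∈ S := ⟨p, hp, rfl⟩
    refine ⟨⟨p.2, hpS⟩, ?_⟩
    have : (hex ⟨p.2, hpS⟩).choose = p.1 := hD.right_unique (hmem ⟨p.2, hpS⟩) (by simpa using hp)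
    simp [MulEquiv.ofBijective, f, this]

end IsTD

end B
section C

variable {G H : Type*} [Group G] [Group H]

theorem conj_one_h (h : H) (p : G × H) :
    (MulAut.conj ((1 : G), h)).toMonoidHom p = (p.1, h * p.2 * h⁻¹) := by
  simp [MulAut.conj_apply, Prod.ext_iff]

theorem conj_g_one (g : G) (p : G × H) :
    (MulAut.conj (g, (1 : H))).toMonoidHom p = (g * p.1 * g⁻¹, p.2) := by
  simp [MulAut.conj_apply, Prod.ext_iff]

/-- The type of twisted diagonal subgroups of `G × H` over `R`. -/
def Pt (R : Subgroup G) (H : Type*) [Group H] : Type _ := {D : Subgroup (G × H) // IsTD R D}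

variable {R : Subgroup G}

theorem isTD_conj {D : Subgroup (G × H)} (hD : IsTD R D) (h : H) :
    IsTD R (D.map (MulAut.conj ((1 : G), h)).toMonoidHom) := by
  refine ⟨?_, ?_, ?_⟩
  · rw [Subgroup.map_map,
      show (MonoidHom.fst G H).comp (MulAut.conj ((1:G), h)).toMonoidHom = MonoidHom.fst G H from
        MonoidHom.ext fun p => by simp [conj_one_h], hD.1]
  · rintro p ⟨q, hq, rfl⟩ h1
    rw [conj_one_h] at h1 ⊢
    have : q.2 = 1 := hD.2.1 q hq h1
    simp [this]
  · rintro p ⟨q, hq, rfl⟩ h1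
    rw [conj_one_h] at h1 ⊢
    have h2 : q.2 = 1 := by
      have := congrArg (fun x => h⁻¹ * x * h) h1
      simpa [mul_assoc] using this
    exact hD.2.2 q hq h2

instance PtSMul : SMul H (Pt R H) :=
  ⟨fun h D => ⟨D.1.map (MulAut.conj ((1 : G), h)).toMonoidHom, isTD_conj D.2 h⟩⟩

theorem Pt.smul_coe (h : H) (D : Pt R H) :
    (h • D : Pt R H).1 = D.1.map (MulAut.conj ((1 : G), h)).toMonoidHom := rfl

theorem Pt.mem_smul_iff {h : H} {D : Pt R H} {p : G × H} :
    p ∈ (h • D : Pt R H).1 ↔ ∃ q ∈ D.1, (q.1, h * q.2 * h⁻¹) = p := by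
  rw [Pt.smul_coe]
  constructor
  · rintro ⟨q, hq, rfl⟩; exact ⟨q, hq, (conj_one_h h q).symm⟩
  · rintro ⟨q, hq, rfl⟩; exact ⟨q, hq, conj_one_h h q⟩

instance PtMulAction : MulAction H (Pt R H) where
  one_smul D := by
    apply Subtype.ext
    rw [Pt.smul_coe]
    have : (MulAut.conj ((1 : G), (1 : H))).toMonoidHom = MonoidHom.id (G × H) :=
      MonoidHom.ext fun p => by simp [conj_one_h, Prod.mk_one_one]
    rw [this, Subgroup.map_id]
  mul_smul h₁ h₂ D := by
    apply Subtype.ext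
    rw [Pt.smul_coe, Pt.smul_coe, Pt.smul_coe, Subgroup.map_map]
    congr 1
    refine MonoidHom.ext fun p => ?_
    rw [MonoidHom.comp_apply, conj_one_h, conj_one_h, conj_one_h]
    simp [mul_assoc]

theorem Pt.stabilizer_eq (D : Pt R H) :
    MulAction.stabilizer H D =
      Subgroup.centralizer ((D.1.map (MonoidHom.snd G H)) : Set H) := by
  ext h
  simp only [MulAction.mem_stabilizer_iff, Subgroup.mem_centralizer_iff]
  constructor
  · intro hst s hs
    obtain ⟨p, hp, rfl⟩ := hs
    have hmem : ((p.1, h * p.2 * h⁻¹) : G × H) ∈ D.1 := by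
      have : (p.1, h * p.2 * h⁻¹) ∈ (h • D : Pt R H).1 := Pt.mem_smul_iff.2 ⟨p, hp, rfl⟩
      rwa [hst] at this
    have heq : h * p.2 * h⁻¹ = p.2 := D.2.left_unique hmem (by simpa using hp)
    have h3 : h * p.2 = p.2 * h := by
      have := congrArg (· * h) heq
      simpa [mul_assoc] using this
    exact h3.symm
  · intro hc
    apply Subtype.ext
    ext p
    constructor
    · intro hp
      obtain ⟨q, hq, rfl⟩ := Pt.mem_smul_iff.1 hp
      have : q.2 * h = h * q.2 := hc q.2 ⟨q, hq, rfl⟩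
      have h2 : h * q.2 * h⁻¹ = q.2 := by rw [← this]; simp [mul_assoc]
      rw [h2]
      exact hq
    · intro hp
      refine Pt.mem_smul_iff.2 ⟨p, hp, ?_⟩
      have : p.2 * h = h * p.2 := hc p.2 ⟨p, hp, rfl⟩
      rw [← this]
      simp [mul_assoc]

section Marks

variable (X : Type*) [MulAction (G × H) X]

theorem fixedPoints_subgroup_iff {K : Subgroup (G × H)} {x : X} :
    x ∈ MulAction.fixedPoints K X ↔ ∀ p : G × H, p ∈ K → p • x = x := by
  rw [MulAction.mem_fixedPoints]
  exact ⟨fun h p hp => h ⟨p, hp⟩, fun h k => h k k.2⟩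

/-- conjugate subgroups have the same number of fixed points -/
theorem conj_toMonoidHom_apply (z p : G × H) :
    (MulAut.conj z).toMonoidHom p = z * p * z⁻¹ := rfl

theorem card_fixed_conj (z : G × H) (K : Subgroup (G × H)) :
    Nat.card (MulAction.fixedPoints (K.map (MulAut.conj z).toMonoidHom) X) =
      Nat.card (MulAction.fixedPoints K X) := by
  refine Nat.card_congr (Equiv.symm ?_)
  refine ⟨fun x => ⟨z • x.1, ?_⟩, fun y => ⟨z⁻¹ • y.1, ?_⟩, fun x => Subtype.ext (by simp),
    fun y => Subtype.ext (by simp)⟩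
  · rw [fixedPoints_subgroup_iff]
    rintro p ⟨q, hq, rfl⟩
    rw [conj_toMonoidHom_apply, smul_smul, show z * q * z⁻¹ * z = z * q from by simp [mul_assoc],
      ← smul_smul, (fixedPoints_subgroup_iff X).1 x.2 q hq]
  · rw [fixedPoints_subgroup_iff]
    intro q hq
    have hz : z * q * z⁻¹ ∈ K.map (MulAut.conj z).toMonoidHom :=
      ⟨q, hq, conj_toMonoidHom_apply z q⟩
    have h2 := (fixedPoints_subgroup_iff X).1 y.2 _ hz
    rw [smul_smul, show q * z⁻¹ = z⁻¹ * (z * q * z⁻¹) from by simp [mul_assoc],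
      ← smul_smul, h2]

variable [Finite G] [Finite H] [Finite X]

/-- The centralizer of `R` divides the number of fixed points of a twisted
diagonal subgroup over `R` on a left-free biset. -/
theorem card_centralizer_fst_dvd (hX : ∀ (g : G) (x : X), (g, (1 : H)) • x = x → g = 1)
    {D : Subgroup (G × H)} (hD : IsTD R D) :
    Nat.card (Subgroup.centralizer (R : Set G)) ∣ Nat.card (MulAction.fixedPoints D X) := by
  set C := Subgroup.centralizer (R : Set G)
  letI : SMul C (MulAction.fixedPoints D X) :=
    ⟨fun c x => ⟨((c : G), (1 : H)) • x.1, by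
      rw [fixedPoints_subgroup_iff]
      intro p hp
      have hcomm : p * ((c : G), (1 : H)) = ((c : G), (1 : H)) * p := by
        have : p.1 * c = c * p.1 :=
          Subgroup.mem_centralizer_iff.1 c.2 p.1 (hD.fst_mem hp)
        ext <;> simp [this]
      rw [smul_smul, hcomm, ← smul_smul,
        (fixedPoints_subgroup_iff X).1 x.2 p hp]⟩⟩
  have smul_def' : ∀ (c : C) (x : MulAction.fixedPoints D X),
      (c • x).1 = ((c : G), (1 : H)) • x.1 := fun _ _ => rfl
  letI : MulAction C (MulAction.fixedPoints D X) :=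
    { one_smul := fun x => Subtype.ext (by rw [smul_def']; simp [Prod.mk_one_one])
      mul_smul := fun c₁ c₂ x => Subtype.ext (by
        rw [smul_def', smul_def', smul_def', smul_smul]
        congr 1
        ext <;> simp) }
  refine card_group_dvd_card_of_free C (MulAction.fixedPoints D X) ?_
  intro c x hcx
  have := congrArg Subtype.val hcx
  rw [smul_def'] at this
  exact Subtype.ext (hX c x.1 this)

/-- similarly for the centralizer of the second projection -/
theorem card_centralizer_snd_dvd (hX : ∀ (h : H) (x : X), ((1 : G), h) • x = x → h = 1)
    {D : Subgroup (G × H)} (hD : IsTD R D) :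
    Nat.card (Subgroup.centralizer ((D.map (MonoidHom.snd G H)) : Set H)) ∣
      Nat.card (MulAction.fixedPoints D X) := by
  set C := Subgroup.centralizer ((D.map (MonoidHom.snd G H)) : Set H)
  letI : SMul C (MulAction.fixedPoints D X) :=
    ⟨fun c x => ⟨((1 : G), (c : H)) • x.1, by
      rw [fixedPoints_subgroup_iff]
      intro p hp
      have hcomm : p * ((1 : G), (c : H)) = ((1 : G), (c : H)) * p := by
        have : p.2 * c = c * p.2 :=
          Subgroup.mem_centralizer_iff.1 c.2 p.2 ⟨p, hp, rfl⟩
        ext <;> simp [this]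
      rw [smul_smul, hcomm, ← smul_smul,
        (fixedPoints_subgroup_iff X).1 x.2 p hp]⟩⟩
  have smul_def' : ∀ (c : C) (x : MulAction.fixedPoints D X),
      (c • x).1 = ((1 : G), (c : H)) • x.1 := fun _ _ => rfl
  letI : MulAction C (MulAction.fixedPoints D X) :=
    { one_smul := fun x => Subtype.ext (by rw [smul_def']; simp [Prod.mk_one_one])
      mul_smul := fun c₁ c₂ x => Subtype.ext (by
        rw [smul_def', smul_def', smul_def', smul_smul]
        congr 1
        ext <;> simp) }
  refine card_group_dvd_card_of_free C (MulAction.fixedPoints D X) ?_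
  intro c x hcx
  have := congrArg Subtype.val hcx
  rw [smul_def'] at this
  exact Subtype.ext (hX c x.1 this)

end Marks

end C
section D

variable {G H : Type*} [Group G] [Group H]

theorem mem_diagSubgroup {R : Subgroup G} {p : G × G} :
    p ∈ diagSubgroup R ↔ ∃ r : R, ((r : G), (r : G)) = p := Iff.rfl

theorem smul_right_unique {U : Type*} [MulAction (G × H) U]
    (hU2 : ∀ (h : H) (x : U), ((1 : G), h) • x = x → h = 1) {g : G} {h h' : H} {u : U}
    (e1 : (g, h) • u = u) (e2 : (g, h') • u = u) : h = h' := by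
  have key : ((g, h')⁻¹ * (g, h)) • u = u := by
    rw [mul_smul, e1, ← e2, ← mul_smul, inv_mul_cancel, one_smul, e2]
  have hprod : ((g, h')⁻¹ * (g, h)) = ((1 : G), h'⁻¹ * h) := by ext <;> simp
  rw [hprod] at key
  have := hU2 _ _ key
  exact (inv_mul_eq_one.1 this).symm

theorem op_smul {V : Type*} [MulAction (G × H) V] (p : H × G) (v : BisetOp H G V) :
    p • v = ((p.2, p.1) : G × H) • (show V from v) := rfl

theorem BisetTensor.mk_eq_mk {G H K X Y : Type*} [Group G] [Group H] [Group K]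
    [MulAction (G × H) X] [MulAction (H × K) Y] {p q : X × Y} :
    (BisetTensor.mk p : BisetTensor G H K X Y) = BisetTensor.mk q ↔
      ∃ h : H, q.1 = ((1 : G), h) • p.1 ∧ q.2 = (h, (1 : K)) • p.2 :=
  ⟨fun he => Quotient.exact he, fun hrel => Quotient.sound hrel⟩

variable (H) in
/-- The set of pairs `(u,v)` jointly "stabilized over `R`". -/
def Aset (R : Subgroup G) (U V : Type*) [MulAction (G × H) U] [MulAction (G × H) V] : Type _ :=
  {a : U × V // ∀ r ∈ R, ∃ h : H, ((r : G), h) • a.1 = a.1 ∧ ((r : G), h) • a.2 = a.2}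

variable {R : Subgroup G} {U V : Type*} [MulAction (G × H) U] [MulAction (G × H) V]

instance Aset.instFinite [Finite U] [Finite V] : Finite (Aset H R U V) := Subtype.finite

theorem card_Aset_eq_sigma (hU : IsBifree G H U) (hV : IsBifree G H V) :
    Nat.card (Aset H R U V) = Nat.card (Σ D : Pt R H,
      (MulAction.fixedPoints D.1 U × MulAction.fixedPoints D.1 V)) := by
  classical
  let bwd : (Σ D : Pt R H, (MulAction.fixedPoints D.1 U × MulAction.fixedPoints D.1 V)) →
      Aset H R U V := fun s => ⟨(s.2.1.1, s.2.2.1), by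
    intro r hr
    obtain ⟨h, hh⟩ := s.1.2.exists_right hr
    exact ⟨h, (fixedPoints_subgroup_iff U).1 s.2.1.2 _ hh,
      (fixedPoints_subgroup_iff V).1 s.2.2.2 _ hh⟩⟩
  have key : ∀ (D D' : Pt R H) (u : U), u ∈ MulAction.fixedPoints D.1 U →
      u ∈ MulAction.fixedPoints D'.1 U → D.1 ≤ D'.1 := by
    intro D D' u hu hu' p hp
    have h1 : p.1 ∈ R := D.2.fst_mem hp
    obtain ⟨h', hh'⟩ := D'.2.exists_right h1
    have e1 : (p.1, p.2) • u = u := by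
      rw [Prod.mk.eta]; exact (fixedPoints_subgroup_iff U).1 hu p hp
    have e2 : (p.1, h') • u = u := (fixedPoints_subgroup_iff U).1 hu' _ hh'
    have h2 : p.2 = h' := smul_right_unique hU.2 e1 e2
    rw [← h2] at hh'
    rwa [Prod.mk.eta] at hh'
  have hinj : Function.Injective bwd := by
    rintro ⟨D, ⟨u, hu⟩, ⟨v, hv⟩⟩ ⟨D', ⟨u', hu'⟩, ⟨v', hv'⟩⟩ heq
    have hval := congrArg Subtype.val heq
    rw [Prod.ext_iff] at hval
    obtain ⟨h1, h2⟩ := hval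
    change u = u' at h1
    change v = v' at h2
    subst h1; subst h2
    have hDD' : D = D' := Subtype.ext (le_antisymm (key D D' u hu hu') (key D' D u hu' hu))
    subst hDD'
    rfl
  have hsurj : Function.Surjective bwd := by
    rintro ⟨⟨u, v⟩, ha⟩
    set Da : Subgroup (G × H) :=
      (R.prod ⊤) ⊓ (MulAction.stabilizer (G × H) u ⊓ MulAction.stabilizer (G × H) v) with hDa
    have mem_Da : ∀ p : G × H, p ∈ Da ↔ p.1 ∈ R ∧ p • u = u ∧ p • v = v := by
      intro p
      simp [hDa, Subgroup.mem_inf, Subgroup.mem_prod, MulAction.mem_stabilizer_iff, and_assoc]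
    have hTD : IsTD R Da := by
      refine ⟨?_, ?_, ?_⟩
      · ext g
        constructor
        · rintro ⟨p, hp, rfl⟩
          exact ((mem_Da p).1 hp).1
        · intro hg
          obtain ⟨h, e1, e2⟩ := ha g hg
          exact ⟨(g, h), (mem_Da _).2 ⟨hg, e1, e2⟩, rfl⟩
      · intro p hp h1
        obtain ⟨-, e1, -⟩ := (mem_Da p).1 hp
        refine hU.2 p.2 u ?_
        rwa [show ((1 : G), p.2) = p from Prod.ext h1.symm rfl]
      · intro p hp h1
        obtain ⟨-, e1, -⟩ := (mem_Da p).1 hp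
        refine hU.1 p.1 u ?_
        rwa [show (p.1, (1 : H)) = p from Prod.ext rfl h1.symm]
    refine ⟨⟨⟨Da, hTD⟩, ⟨u, ?_⟩, ⟨v, ?_⟩⟩, rfl⟩
    · rw [fixedPoints_subgroup_iff]
      exact fun p hp => ((mem_Da p).1 hp).2.1
    · rw [fixedPoints_subgroup_iff]
      exact fun p hp => ((mem_Da p).1 hp).2.2
  exact Nat.card_congr (Equiv.ofBijective bwd ⟨hinj, hsurj⟩).symm

instance Aset.instSMul : SMul H (Aset H R U V) :=
  ⟨fun h a => ⟨(((1 : G), h) • a.1.1, ((1 : G), h) • a.1.2), by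
    intro r hr
    obtain ⟨h', e1, e2⟩ := a.2 r hr
    refine ⟨h * h' * h⁻¹, ?_, ?_⟩
    · rw [smul_smul, show ((r : G), h * h' * h⁻¹) * ((1 : G), h) = ((1 : G), h) * (r, h') from by
        ext <;> simp [mul_assoc], mul_smul, e1]
    · rw [smul_smul, show ((r : G), h * h' * h⁻¹) * ((1 : G), h) = ((1 : G), h) * (r, h') from by
        ext <;> simp [mul_assoc], mul_smul, e2]⟩⟩

theorem Aset.smul_coe (h : H) (a : Aset H R U V) :
    (h • a : Aset H R U V).1 = (((1 : G), h) • a.1.1, ((1 : G), h) • a.1.2) := rfl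

instance Aset.instMulAction : MulAction H (Aset H R U V) where
  one_smul a := by
    apply Subtype.ext
    rw [Aset.smul_coe]
    ext
    · show (((1 : G), (1 : H)) • a.1.1 : U) = a.1.1
      rw [show ((1 : G), (1 : H)) = (1 : G × H) from rfl, one_smul]
    · show (((1 : G), (1 : H)) • a.1.2 : V) = a.1.2
      rw [show ((1 : G), (1 : H)) = (1 : G × H) from rfl, one_smul]
  mul_smul h₁ h₂ a := by
    apply Subtype.ext
    rw [Aset.smul_coe, Aset.smul_coe, Aset.smul_coe]
    ext
    · show (((1 : G), h₁ * h₂) • a.1.1 : U) = ((1 : G), h₁) • ((1 : G), h₂) • a.1.1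
      rw [smul_smul, show ((1 : G), h₁) * ((1 : G), h₂) = ((1 : G), h₁ * h₂) from by ext <;> simp]
    · show (((1 : G), h₁ * h₂) • a.1.2 : V) = ((1 : G), h₁) • ((1 : G), h₂) • a.1.2
      rw [smul_smul, show ((1 : G), h₁) * ((1 : G), h₂) = ((1 : G), h₁ * h₂) from by ext <;> simp]

theorem Aset.free (hU : IsBifree G H U) :
    ∀ (h : H) (a : Aset H R U V), h • a = a → h = 1 := by
  intro h a ha
  have := congrArg (fun b : Aset H R U V => b.1.1) ha
  exact hU.2 h a.1.1 this

/-- The canonical map from `Aset` to the tensor product. -/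
def toT (a : Aset H R U V) : BisetTensor G H G U (BisetOp H G V) :=
  BisetTensor.mk (a.1.1, show BisetOp H G V from a.1.2)

theorem toT_fixed (a : Aset H R U V) :
    toT a ∈ MulAction.fixedPoints (diagSubgroup R) (BisetTensor G H G U (BisetOp H G V)) := by
  rw [fixedPoints_subgroup_iff]
  rintro p hp
  obtain ⟨r, hr⟩ := hp
  have hr' : (((r : G), (r : G)) : G × G) = p := hr
  subst hr'
  rw [toT, BisetTensor.smul_mk]
  obtain ⟨h, e1, e2⟩ := a.2 (r : G) r.2
  refine BisetTensor.mk_eq_mk.2 ⟨h, ?_, ?_⟩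
  · refine (?_ : _ = a.1.1).symm
    rw [smul_smul, show ((1 : G), h) * (((r : G), (1 : H)) : G × H) = ((r : G), h) from by
      ext <;> simp, e1]
  · refine (?_ : _ = (show BisetOp H G V from a.1.2)).symm
    show (((1 : G), h) : G × H) • ((((r : G), (1 : H)) : G × H) • a.1.2) = a.1.2
    rw [smul_smul, show ((1 : G), h) * (((r : G), (1 : H)) : G × H) = ((r : G), h) from by
      ext <;> simp, e2]

theorem toT_invariant (h : H) (a : Aset H R U V) : toT (h • a) = toT a := by
  refine (BisetTensor.mk_eq_mk.2 ⟨h, rfl, rfl⟩).symm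

theorem card_Aset_eq_tensor [Finite H] [Finite U] [Finite V]
    (hU : IsBifree G H U) (hV : IsBifree G H V) :
    Nat.card (Aset H R U V) =
      Nat.card (MulAction.fixedPoints (diagSubgroup R)
        (BisetTensor G H G U (BisetOp H G V))) * Nat.card H := by
  classical
  haveI : Finite (BisetTensor G H G U (BisetOp H G V)) := Quotient.finite _
  rw [card_of_free H (Aset H R U V) (Aset.free hU)]
  congr 1
  let F : MulAction.orbitRel.Quotient H (Aset H R U V) →
      MulAction.fixedPoints (diagSubgroup R) (BisetTensor G H G U (BisetOp H G V)) :=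
    Quotient.lift (fun a => (⟨toT a, toT_fixed a⟩ : MulAction.fixedPoints (diagSubgroup R)
      (BisetTensor G H G U (BisetOp H G V)))) (by
      intro a b hab
      have hmem : a ∈ MulAction.orbit H b := hab
      obtain ⟨h, rfl⟩ := MulAction.mem_orbit_iff.1 hmem
      exact Subtype.ext (toT_invariant h b))
  refine Nat.card_congr (Equiv.ofBijective F ⟨?_, ?_⟩)
  · intro q₁ q₂
    refine Quotient.inductionOn₂ q₁ q₂ ?_
    intro a b hq
    have hmk := congrArg Subtype.val hq
    obtain ⟨h, e1, e2⟩ := BisetTensor.mk_eq_mk.1 hmk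
    have hb : b = h • a := Subtype.ext (Prod.ext e1 e2)
    apply Quotient.sound
    show a ∈ MulAction.orbit H b
    rw [hb]
    exact MulAction.mem_orbit_iff.2 ⟨h⁻¹, inv_smul_smul h a⟩
  · rintro ⟨t, ht⟩
    obtain ⟨p, hp⟩ := Quotient.exists_rep t
    obtain ⟨u, v⟩ := p
    have hmk : (BisetTensor.mk (u, v) : BisetTensor G H G U (BisetOp H G V)) = t := hp
    have ha : ∀ r ∈ R, ∃ h : H, ((r : G), h) • u = u ∧
        (((r : G), h) : G × H) • (show V from v) = v := by
      intro r hr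
      have hfix : ((((r : G), (r : G))) : G × G) • t = t :=
        (fixedPoints_subgroup_iff _).1 ht _ ⟨⟨r, hr⟩, rfl⟩
      rw [← hmk, BisetTensor.smul_mk] at hfix
      obtain ⟨h, e1, e2⟩ := BisetTensor.mk_eq_mk.1 hfix
      refine ⟨h, ?_, ?_⟩
      · rw [show (((r : G), h) : G × H) = ((1 : G), h) * ((r : G), (1 : H)) from by ext <;> simp,
          mul_smul]
        exact e1.symm
      · have e2' : (show V from v) = (((1 : G), h) : G × H) • ((((r : G), (1 : H)) : G × H) • (show V from v)) := e2
        rw [show (((r : G), h) : G × H) = ((1 : G), h) * ((r : G), (1 : H)) from by ext <;> simp,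
          mul_smul]
        exact e2'.symm
    refine ⟨⟦(⟨(u, v), ha⟩ : Aset H R U V)⟧, Subtype.ext hmk⟩

end D
section F

theorem fixedPoints_subgroup_iff_gen {M X : Type*} [Group M] [MulAction M X] {K : Subgroup M}
    {x : X} : x ∈ MulAction.fixedPoints K X ↔ ∀ m ∈ K, m • x = x := by
  rw [MulAction.mem_fixedPoints]
  exact ⟨fun h m hm => h ⟨m, hm⟩, fun h k => h k k.2⟩

theorem nat_card_sigma {ι : Type*} [Fintype ι] (f : ι → Type*) [∀ i, Finite (f i)] :
    Nat.card (Σ i, f i) = ∑ i, Nat.card (f i) := by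
  haveI := fun i => Fintype.ofFinite (f i)
  simp [Nat.card_eq_fintype_card, Fintype.card_sigma]

theorem finite_subgroup_type {M : Type*} [Group M] [Finite M] : Finite (Subgroup M) :=
  Finite.of_injective (fun D : Subgroup M => (D : Set M)) SetLike.coe_injective

instance Pt.instFinite {G H : Type*} [Group G] [Group H] [Finite G] [Finite H]
    {R : Subgroup G} : Finite (Pt R H) := by
  haveI : Finite (Subgroup (G × H)) := finite_subgroup_type
  exact Subtype.finite

/-- equivariant bijections preserve fixed-point counts -/
theorem iso_card_fixed {M A B : Type*} [Group M] [MulAction M A] [MulAction M B]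
    (h : IsoAsGSets M A B) (K : Subgroup M) :
    Nat.card (MulAction.fixedPoints K A) = Nat.card (MulAction.fixedPoints K B) := by
  obtain ⟨e, he⟩ := h
  refine Nat.card_congr ⟨fun a => ⟨e a.1, ?_⟩, fun b => ⟨e.symm b.1, ?_⟩,
    fun a => Subtype.ext (by simp), fun b => Subtype.ext (by simp)⟩
  · rw [fixedPoints_subgroup_iff_gen]
    intro m hm
    rw [← he m a.1, fixedPoints_subgroup_iff_gen.1 a.2 m hm]
  · rw [fixedPoints_subgroup_iff_gen]
    intro m hm
    apply e.injective
    rw [he m (e.symm b.1)]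
    simp [fixedPoints_subgroup_iff_gen.1 b.2 m hm]

theorem card_fixed_sum {M A B : Type*} [Group M] [MulAction M A] [MulAction M B] [Finite A]
    [Finite B] (K : Subgroup M) :
    Nat.card (MulAction.fixedPoints K (A ⊕ B)) =
      Nat.card (MulAction.fixedPoints K A) + Nat.card (MulAction.fixedPoints K B) := by
  rw [← Nat.card_sum]
  refine Nat.card_congr (Equiv.ofBijective (Sum.elim
    (fun a : MulAction.fixedPoints K A => (⟨Sum.inl a.1, ?_⟩ : MulAction.fixedPoints K (A ⊕ B)))
    (fun b : MulAction.fixedPoints K B => ⟨Sum.inr b.1, ?_⟩)) ⟨?_, ?_⟩).symm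
  · rw [fixedPoints_subgroup_iff_gen]
    intro m hm
    rw [Sum.smul_inl, fixedPoints_subgroup_iff_gen.1 a.2 m hm]
  · rw [fixedPoints_subgroup_iff_gen]
    intro m hm
    rw [Sum.smul_inr, fixedPoints_subgroup_iff_gen.1 b.2 m hm]
  · rintro (a | a) (b | b) hab <;>
      simp only [Sum.elim_inl, Sum.elim_inr, Subtype.ext_iff] at hab <;>
      first
        | (exact absurd hab Sum.inl_ne_inr)
        | (exact absurd hab Sum.inr_ne_inl)
        | (exact congrArg _ (Subtype.ext (by injection hab)))
  · rintro ⟨(x | x), hx⟩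
    · refine ⟨Sum.inl ⟨x, ?_⟩, rfl⟩
      rw [fixedPoints_subgroup_iff_gen]
      intro m hm
      have := fixedPoints_subgroup_iff_gen.1 hx m hm
      rw [Sum.smul_inl] at this
      injection this
    · refine ⟨Sum.inr ⟨x, ?_⟩, rfl⟩
      rw [fixedPoints_subgroup_iff_gen]
      intro m hm
      have := fixedPoints_subgroup_iff_gen.1 hx m hm
      rw [Sum.smul_inr] at this
      injection this

theorem card_fixed_bisetGrp {G : Type*} [Group G] (R : Subgroup G) :
    Nat.card (MulAction.fixedPoints (diagSubgroup R) (BisetGrp G)) =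
      Nat.card (Subgroup.centralizer (R : Set G)) := by
  refine Nat.card_congr ⟨fun x => ⟨x.1.val, ?_⟩, fun c => ⟨(⟨c.1⟩ : BisetGrp G), ?_⟩,
    fun x => Subtype.ext rfl, fun c => Subtype.ext rfl⟩
  · rw [Subgroup.mem_centralizer_iff]
    intro r hr
    have := fixedPoints_subgroup_iff_gen.1 x.2 ((r, r) : G × G) ⟨⟨r, hr⟩, rfl⟩
    rw [BisetGrp.smul_def] at this
    have hval : r * x.1.val * r⁻¹ = x.1.val := congrArg BisetGrp.val this
    calc r * x.1.val = r * x.1.val * r⁻¹ * r := by simp [mul_assoc]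
    _ = x.1.val * r := by rw [hval]
  · rw [fixedPoints_subgroup_iff_gen]
    rintro p hp
    obtain ⟨r, hr⟩ := hp
    have hr' : (((r : G), (r : G)) : G × G) = p := hr
    subst hr'
    rw [BisetGrp.smul_def]
    have hcomm : (r : G) * c.1 = c.1 * r :=
      Subgroup.mem_centralizer_iff.1 c.2 (r : G) r.2
    congr 1
    show (r : G) * c.1 * (r : G)⁻¹ = c.1
    rw [hcomm, mul_assoc, mul_inv_cancel, mul_one]

end F
section GG

open MulAction Subgroup

variable {G H : Type*} [Group G] [Group H]

/-- the mark of a twisted diagonal subgroup on a biset -/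
noncomputable abbrev markD (R : Subgroup G) (X : Type*) [MulAction (G × H) X] (D : Pt R H) : ℕ :=
  Nat.card (MulAction.fixedPoints D.1 X)

variable [Finite G] [Finite H]
variable (X Y : Type*) [MulAction (G × H) X] [MulAction (G × H) Y] [Finite X] [Finite Y]
variable {R : Subgroup G}

theorem key_sum [Fintype (Pt R H)] (hX : IsBifree G H X) (hY : IsBifree G H Y)
    (horth : IsOrthogonalPair G H X Y) :
    ∑ D : Pt R H, ((markD R X D : ℤ) - markD R Y D) ^ 2 =
      (Nat.card H : ℤ) * (Nat.card (Subgroup.centralizer (R : Set G)) : ℤ) := by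
  classical
  haveI : Finite (BisetTensor G H G X (BisetOp H G X)) := Quotient.finite _
  haveI : Finite (BisetTensor G H G X (BisetOp H G Y)) := Quotient.finite _
  haveI : Finite (BisetTensor G H G Y (BisetOp H G X)) := Quotient.finite _
  haveI : Finite (BisetTensor G H G Y (BisetOp H G Y)) := Quotient.finite _
  have hiso := iso_card_fixed horth (diagSubgroup R)
  rw [card_fixed_sum, card_fixed_sum, card_fixed_sum, card_fixed_bisetGrp] at hiso
  have tXX : Nat.card (MulAction.fixedPoints (diagSubgroup R)
        (BisetTensor G H G X (BisetOp H G X))) * Nat.card H =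
      ∑ D : Pt R H, markD R X D * markD R X D := by
    rw [← card_Aset_eq_tensor hX hX, card_Aset_eq_sigma hX hX, nat_card_sigma]
    exact Finset.sum_congr rfl fun D _ => Nat.card_prod _ _
  have tYY : Nat.card (MulAction.fixedPoints (diagSubgroup R)
        (BisetTensor G H G Y (BisetOp H G Y))) * Nat.card H =
      ∑ D : Pt R H, markD R Y D * markD R Y D := by
    rw [← card_Aset_eq_tensor hY hY, card_Aset_eq_sigma hY hY, nat_card_sigma]
    exact Finset.sum_congr rfl fun D _ => Nat.card_prod _ _
  have tXY : Nat.card (MulAction.fixedPoints (diagSubgroup R)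
        (BisetTensor G H G X (BisetOp H G Y))) * Nat.card H =
      ∑ D : Pt R H, markD R X D * markD R Y D := by
    rw [← card_Aset_eq_tensor hX hY, card_Aset_eq_sigma hX hY, nat_card_sigma]
    exact Finset.sum_congr rfl fun D _ => Nat.card_prod _ _
  have tYX : Nat.card (MulAction.fixedPoints (diagSubgroup R)
        (BisetTensor G H G Y (BisetOp H G X))) * Nat.card H =
      ∑ D : Pt R H, markD R Y D * markD R X D := by
    rw [← card_Aset_eq_tensor hY hX, card_Aset_eq_sigma hY hX, nat_card_sigma]
    exact Finset.sum_congr rfl fun D _ => Nat.card_prod _ _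
  have hmul := congrArg (· * Nat.card H) hiso
  simp only [add_mul] at hmul
  rw [tXX, tYY, tXY, tYX] at hmul
  have hZ := congrArg (Nat.cast : ℕ → ℤ) hmul
  push_cast at hZ
  have hexp : ∀ D : Pt R H, ((markD R X D : ℤ) - markD R Y D) ^ 2 =
      (markD R X D : ℤ) * markD R X D + (markD R Y D : ℤ) * markD R Y D -
        ((markD R X D : ℤ) * markD R Y D + (markD R Y D : ℤ) * markD R X D) :=
    fun D => by ring
  rw [Finset.sum_congr rfl fun D _ => hexp D, Finset.sum_sub_distrib,
    Finset.sum_add_distrib, Finset.sum_add_distrib]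
  linear_combination hZ

theorem main_analysis [Fintype (Pt R H)] (hX : IsBifree G H X) (hY : IsBifree G H Y)
    (horth : IsOrthogonalPair G H X Y) (D0 : Pt R H)
    (hd0 : markD R X D0 ≠ markD R Y D0) :
    (∀ q : Pt R H, markD R X q ≠ markD R Y q → ∃ h : H, q = h • D0) ∧
    ((markD R X D0 : ℤ) - markD R Y D0).natAbs = Nat.card (Subgroup.centralizer (R : Set G)) ∧
    ((markD R X D0 : ℤ) - markD R Y D0).natAbs =
      Nat.card (Subgroup.centralizer ((D0.1.map (MonoidHom.snd G H)) : Set H)) := by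
  classical
  set a := Nat.card (Subgroup.centralizer (R : Set G)) with ha
  set b := Nat.card (Subgroup.centralizer ((D0.1.map (MonoidHom.snd G H)) : Set H)) with hb
  set d : Pt R H → ℤ := fun D => (markD R X D : ℤ) - markD R Y D with hd
  have hsum : ∑ D : Pt R H, d D ^ 2 = (Nat.card H : ℤ) * a := key_sum X Y hX hY horth
  have hmarkX : ∀ (h : H) (D : Pt R H), markD R X (h • D) = markD R X D := fun h D =>
    card_fixed_conj X ((1 : G), h) D.1
  have hmarkY : ∀ (h : H) (D : Pt R H), markD R Y (h • D) = markD R Y D := fun h D =>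
    card_fixed_conj Y ((1 : G), h) D.1
  have hdconst : ∀ (h : H) (D : Pt R H), d (h • D) = d D := fun h D => by
    rw [hd]; dsimp only; rw [hmarkX, hmarkY]
  haveI : Fintype (MulAction.orbit H D0) := Fintype.ofFinite _
  let O : Finset (Pt R H) := (MulAction.orbit H D0).toFinset
  have hmemO : ∀ q : Pt R H, q ∈ O ↔ ∃ h : H, h • D0 = q := by
    intro q; rw [Set.mem_toFinset]; exact MulAction.mem_orbit_iff
  have hD0O : D0 ∈ O := (hmemO D0).2 ⟨1, one_smul H D0⟩
  have hstab : Nat.card (MulAction.stabilizer H D0) = b := by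
    rw [Pt.stabilizer_eq]
  have hOb : O.card * b = Nat.card H := by
    have h1 : Nat.card (MulAction.orbit H D0) * Nat.card (MulAction.stabilizer H D0) =
        Nat.card H := by
      rw [← Nat.card_prod]
      exact Nat.card_congr (MulAction.orbitProdStabilizerEquivGroup H D0)
    rw [← h1, hstab, Set.toFinset_card, Nat.card_eq_fintype_card]
  -- positivity
  haveI : Nonempty (Subgroup.centralizer (R : Set G)) := ⟨1⟩
  haveI : Nonempty (Subgroup.centralizer ((D0.1.map (MonoidHom.snd G H)) : Set H)) := ⟨1⟩
  have ha_pos : 0 < a := Nat.card_pos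
  have hb_pos : 0 < b := Nat.card_pos
  have hH_pos : 0 < Nat.card H := Nat.card_pos
  -- divisibility
  have hdvd_a : ∀ D : Pt R H, (a : ℤ) ∣ d D := by
    intro D
    exact dvd_sub (Int.natCast_dvd_natCast.2 (card_centralizer_fst_dvd X hX.1 D.2))
      (Int.natCast_dvd_natCast.2 (card_centralizer_fst_dvd Y hY.1 D.2))
  have hdvd_b : (b : ℤ) ∣ d D0 :=
    dvd_sub (Int.natCast_dvd_natCast.2 (card_centralizer_snd_dvd X hX.2 D0.2))
      (Int.natCast_dvd_natCast.2 (card_centralizer_snd_dvd Y hY.2 D0.2))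
  have hd0' : d D0 ≠ 0 := sub_ne_zero.2 (fun hc => hd0 (Nat.cast_injective hc))
  set e := (d D0).natAbs with he
  have he_pos : 0 < e := Int.natAbs_pos.2 hd0'
  have hae : a ∣ e := by
    have := Int.natAbs_dvd_natAbs.2 (hdvd_a D0)
    rwa [Int.natAbs_natCast] at this
  have hbe : b ∣ e := by
    have := Int.natAbs_dvd_natAbs.2 hdvd_b
    rwa [Int.natAbs_natCast] at this
  have hlcm : Nat.lcm a b ∣ e := Nat.lcm_dvd hae hbe
  have hlcm_pos : 0 < Nat.lcm a b := Nat.pos_of_ne_zero (fun hc => by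
    rw [hc] at hlcm
    exact absurd (zero_dvd_iff.1 hlcm) he_pos.ne')
  have hlcm_le : Nat.lcm a b ≤ e := Nat.le_of_dvd he_pos hlcm
  have hgcd_le : Nat.gcd a b ≤ Nat.lcm a b :=
    Nat.le_of_dvd hlcm_pos (dvd_trans (Nat.gcd_dvd_left a b) (Nat.dvd_lcm_left a b))
  have hab_le : a * b ≤ e * e := by
    calc a * b = Nat.gcd a b * Nat.lcm a b := (Nat.gcd_mul_lcm a b).symm
      _ ≤ Nat.lcm a b * Nat.lcm a b := Nat.mul_le_mul_right _ hgcd_le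
      _ ≤ e * e := Nat.mul_le_mul hlcm_le hlcm_le
  have hd0sq : d D0 ^ 2 = ((e : ℤ)) ^ 2 := by
    rw [he, ← sq_abs (d D0), Int.abs_eq_natAbs]
  have horbsum : ∑ D ∈ O, d D ^ 2 = (O.card : ℤ) * d D0 ^ 2 := by
    have hco : ∀ D ∈ O, d D ^ 2 = d D0 ^ 2 := by
      intro D hD
      obtain ⟨h, hh⟩ := (hmemO D).1 hD
      rw [← hh, hdconst]
    rw [Finset.sum_congr rfl hco, Finset.sum_const, nsmul_eq_mul]
  have hO_le : ∑ D ∈ O, d D ^ 2 ≤ ∑ D : Pt R H, d D ^ 2 :=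
    Finset.sum_le_sum_of_subset_of_nonneg (Finset.subset_univ O) (fun D _ _ => sq_nonneg _)
  have hcardOb : ((O.card : ℤ)) * b = (Nat.card H : ℤ) := by exact_mod_cast congrArg (Nat.cast : ℕ → ℤ) hOb
  have hlow : (Nat.card H : ℤ) * a ≤ (O.card : ℤ) * d D0 ^ 2 := by
    calc (Nat.card H : ℤ) * a = ((O.card : ℤ) * b) * a := by rw [hcardOb]
      _ = (O.card : ℤ) * ((a * b : ℕ) : ℤ) := by push_cast; ring
      _ ≤ (O.card : ℤ) * ((e * e : ℕ) : ℤ) := by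
          refine mul_le_mul_of_nonneg_left ?_ (by positivity)
          exact_mod_cast hab_le
      _ = (O.card : ℤ) * d D0 ^ 2 := by rw [hd0sq]; push_cast; ring
  have hchain : (O.card : ℤ) * d D0 ^ 2 ≤ (Nat.card H : ℤ) * a := by
    rw [← horbsum, ← hsum]
    exact hO_le
  have heq1 : (O.card : ℤ) * d D0 ^ 2 = (Nat.card H : ℤ) * a := le_antisymm hchain hlow
  have heqsum : ∑ D ∈ O, d D ^ 2 = ∑ D : Pt R H, d D ^ 2 := by rw [horbsum, heq1, hsum]
  have hzero : ∀ q : Pt R H, q ∉ O → d q = 0 := by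
    intro q hq
    have hsplit := Finset.sum_sdiff (f := fun D : Pt R H => d D ^ 2) (Finset.subset_univ O)
    have hdiff : ∑ D ∈ Finset.univ \ O, d D ^ 2 = 0 := by
      have h2 : ∑ D ∈ Finset.univ, d D ^ 2 = ∑ D : Pt R H, d D ^ 2 := rfl
      rw [h2] at hsplit
      linarith [heqsum, hsplit]
    have hq2 : d q ^ 2 = 0 :=
      (Finset.sum_eq_zero_iff_of_nonneg (fun D _ => sq_nonneg (d D))).1 hdiff q
        (Finset.mem_sdiff.2 ⟨Finset.mem_univ q, hq⟩)
    exact sq_eq_zero_iff.1 hq2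
  have huniq : ∀ q : Pt R H, markD R X q ≠ markD R Y q → ∃ h : H, q = h • D0 := by
    intro q hq
    have hdq : d q ≠ 0 := sub_ne_zero.2 (fun hc => hq (Nat.cast_injective hc))
    by_contra hcon
    push_neg at hcon
    refine hdq (hzero q (fun hmem => ?_))
    obtain ⟨h, hh⟩ := (hmemO q).1 hmem
    exact (hcon h) hh.symm
  have he2 : e * e = a * b := by
    have hO_pos : 0 < O.card := Finset.card_pos.2 ⟨D0, hD0O⟩
    have hcard_eq : (O.card : ℤ) * d D0 ^ 2 = (O.card : ℤ) * ((a * b : ℕ) : ℤ) := by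
      rw [heq1, ← hcardOb]; push_cast; ring
    have hcancel := mul_left_cancel₀ (a := (O.card : ℤ))
      (by exact_mod_cast hO_pos.ne') hcard_eq
    have : ((e : ℤ)) ^ 2 = ((a * b : ℕ) : ℤ) := by rw [← hd0sq]; exact hcancel
    have h2 : ((e : ℤ)) * e = (a : ℤ) * b := by
      rw [← pow_two, this]
      push_cast
      ring
    exact_mod_cast h2
  have hea : a ≤ e := Nat.le_of_dvd he_pos hae
  have heb : b ≤ e := Nat.le_of_dvd he_pos hbe
  have hlea : e ≤ a := by
    have : e * e ≤ a * e := by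
      calc e * e = a * b := he2
        _ ≤ a * e := Nat.mul_le_mul_left a heb
    exact Nat.le_of_mul_le_mul_right this he_pos
  have hleb : e ≤ b := by
    have : e * e ≤ b * e := by
      calc e * e = a * b := he2
        _ = b * a := Nat.mul_comm a b
        _ ≤ b * e := Nat.mul_le_mul_left b hea
    exact Nat.le_of_mul_le_mul_right this he_pos
  exact ⟨huniq, le_antisymm hlea hea, le_antisymm hleb heb⟩

end GG
/-- for an orthogonal pair `(X,Y)` and each `R ≤ G` there is a twisted diagonal
subgroup `Δ(R,α,S)` on which the marks of `X` and `Y` differ; it is unique up to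
`(1×H)`-conjugacy; and for any such subgroup the difference of marks has absolute value
`|C_G(R)| = |C_H(S)|`, and `N_{α⁻¹} = N_G(R)`. -/
theorem statement11 {G H : Type*} [Group G] [Group H] [Finite G] [Finite H]
    (X Y : Type*) [MulAction (G × H) X] [MulAction (G × H) Y] [Finite X] [Finite Y]
    (hX : IsBifree G H X) (hY : IsBifree G H Y) (horth : IsOrthogonalPair G H X Y)
    (R : Subgroup G) :
    (∃ (S : Subgroup H) (α : S ≃* R),
        Nat.card (MulAction.fixedPoints (twistedDiagonal R S α) X) ≠
          Nat.card (MulAction.fixedPoints (twistedDiagonal R S α) Y)) ∧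
    (∀ (S : Subgroup H) (α : S ≃* R) (S' : Subgroup H) (α' : S' ≃* R),
        Nat.card (MulAction.fixedPoints (twistedDiagonal R S α) X) ≠
          Nat.card (MulAction.fixedPoints (twistedDiagonal R S α) Y) →
        Nat.card (MulAction.fixedPoints (twistedDiagonal R S' α') X) ≠
          Nat.card (MulAction.fixedPoints (twistedDiagonal R S' α') Y) →
        ∃ h : H, twistedDiagonal R S' α' =
          Subgroup.map (MulAut.conj ((1 : G), h)).toMonoidHom (twistedDiagonal R S α)) ∧
    (∀ (S : Subgroup H) (α : S ≃* R),
        Nat.card (MulAction.fixedPoints (twistedDiagonal R S α) X) ≠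
          Nat.card (MulAction.fixedPoints (twistedDiagonal R S α) Y) →
        ((Nat.card (MulAction.fixedPoints (twistedDiagonal R S α) X) : ℤ) -
            (Nat.card (MulAction.fixedPoints (twistedDiagonal R S α) Y) : ℤ)).natAbs =
          Nat.card (Subgroup.centralizer (R : Set G)) ∧
        ((Nat.card (MulAction.fixedPoints (twistedDiagonal R S α) X) : ℤ) -
            (Nat.card (MulAction.fixedPoints (twistedDiagonal R S α) Y) : ℤ)).natAbs =
          Nat.card (Subgroup.centralizer (S : Set H)) ∧
        NsetAlphaInv R S α = (Subgroup.normalizer (R : Set G) : Set G)) := by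
  classical
  haveI : Fintype (Pt R H) := Fintype.ofFinite _
  haveI : Nonempty (Subgroup.centralizer (R : Set G)) := ⟨1⟩
  have hsum := key_sum (R := R) X Y hX hY horth
  have hapos : (0 : ℤ) <
      (Nat.card H : ℤ) * (Nat.card (Subgroup.centralizer (R : Set G)) : ℤ) := by
    have h1 : 0 < Nat.card H := Nat.card_pos
    have h2 : 0 < Nat.card (Subgroup.centralizer (R : Set G)) := Nat.card_pos
    exact_mod_cast Nat.mul_pos h1 h2
  have hexD : ∃ D : Pt R H, markD R X D ≠ markD R Y D := by
    by_contra hc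
    push_neg at hc
    have hz : ∑ D : Pt R H, ((markD R X D : ℤ) - markD R Y D) ^ 2 = 0 :=
      Finset.sum_eq_zero (fun D _ => by rw [hc D]; ring)
    rw [hz] at hsum
    linarith
  obtain ⟨D, hD⟩ := hexD
  refine ⟨?_, ?_, ?_⟩
  · obtain ⟨S, α, hrepr⟩ := D.2.exists_repr
    refine ⟨S, α, ?_⟩
    rw [hrepr]
    exact hD
  · intro S α S' α' h1 h2
    have h1' : markD R X (⟨twistedDiagonal R S α, isTD_twistedDiagonal R S α⟩ : Pt R H) ≠
        markD R Y (⟨twistedDiagonal R S α, isTD_twistedDiagonal R S α⟩ : Pt R H) := h1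
    have h2' : markD R X (⟨twistedDiagonal R S' α', isTD_twistedDiagonal R S' α'⟩ : Pt R H) ≠
        markD R Y (⟨twistedDiagonal R S' α', isTD_twistedDiagonal R S' α'⟩ : Pt R H) := h2
    obtain ⟨huniq, -, -⟩ := main_analysis X Y hX hY horth _ h1'
    obtain ⟨h, hh⟩ := huniq _ h2'
    exact ⟨h, congrArg Subtype.val hh⟩
  · intro S α h1
    have h1' : markD R X (⟨twistedDiagonal R S α, isTD_twistedDiagonal R S α⟩ : Pt R H) ≠
        markD R Y (⟨twistedDiagonal R S α, isTD_twistedDiagonal R S α⟩ : Pt R H) := h1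
    obtain ⟨huniq, hA, hB⟩ := main_analysis X Y hX hY horth _ h1'
    refine ⟨hA, ?_, ?_⟩
    · rw [show ((⟨twistedDiagonal R S α, isTD_twistedDiagonal R S α⟩ : Pt R H)).1.map
          (MonoidHom.snd G H) = S from map_snd_twistedDiagonal R S α] at hB
      exact hB
    · apply Set.ext
      intro g
      constructor
      · exact fun hg => hg.1
      · intro hg
        have hgN : g ∈ Subgroup.normalizer (R : Set G) := hg
        refine ⟨hgN, ?_⟩
        have hg' : ∀ x : G, x ∈ R ↔ g * x * g⁻¹ ∈ R := Subgroup.mem_normalizer_iff.1 hgN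
        let e : R ≃* R :=
          { toFun := fun r => ⟨g * r * g⁻¹, (hg' r).1 r.2⟩
            invFun := fun r => ⟨g⁻¹ * r * g, by
              refine (hg' (g⁻¹ * (r : G) * g)).2 ?_
              have hre : g * (g⁻¹ * (r : G) * g) * g⁻¹ = (r : G) := by group
              rw [hre]
              exact r.2⟩
            left_inv := fun r => Subtype.ext (by show g⁻¹ * (g * r * g⁻¹) * g = (r : G); group)
            right_inv := fun r => Subtype.ext (by show g * (g⁻¹ * r * g) * g⁻¹ = (r : G); group)
            map_mul' := fun r t => Subtype.ext (by
              show g * ((r : G) * t) * g⁻¹ = (g * r * g⁻¹) * (g * t * g⁻¹)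
              group) }
        have hconj : twistedDiagonal R S (α.trans e) =
            (twistedDiagonal R S α).map (MulAut.conj ((g, (1 : H)) : G × H)).toMonoidHom := by
          ext p
          rw [mem_tD]
          constructor
          · rintro ⟨s, rfl⟩
            exact ⟨((α s : G), (s : H)), mem_tD.2 ⟨s, rfl⟩, by rw [conj_g_one]; exact rfl⟩
          · rintro ⟨q, hq, rfl⟩
            obtain ⟨s, rfl⟩ := mem_tD.1 hq
            exact ⟨s, by rw [conj_g_one]; exact rfl⟩
        have hmX : markD R X (⟨twistedDiagonal R S (α.trans e), isTD_twistedDiagonal R S (α.trans e)⟩ : Pt R H) =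
            markD R X (⟨twistedDiagonal R S α, isTD_twistedDiagonal R S α⟩ : Pt R H) := by
          show Nat.card _ = Nat.card _
          rw [show (⟨twistedDiagonal R S (α.trans e), isTD_twistedDiagonal R S (α.trans e)⟩ : Pt R H).1 =
            ((⟨twistedDiagonal R S α, isTD_twistedDiagonal R S α⟩ : Pt R H)).1.map
              (MulAut.conj ((g, (1 : H)) : G × H)).toMonoidHom from hconj]
          exact card_fixed_conj X _ _
        have hmY : markD R Y (⟨twistedDiagonal R S (α.trans e), isTD_twistedDiagonal R S (α.trans e)⟩ : Pt R H) =
            markD R Y (⟨twistedDiagonal R S α, isTD_twistedDiagonal R S α⟩ : Pt R H) := by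
          show Nat.card _ = Nat.card _
          rw [show (⟨twistedDiagonal R S (α.trans e), isTD_twistedDiagonal R S (α.trans e)⟩ : Pt R H).1 =
            ((⟨twistedDiagonal R S α, isTD_twistedDiagonal R S α⟩ : Pt R H)).1.map
              (MulAut.conj ((g, (1 : H)) : G × H)).toMonoidHom from hconj]
          exact card_fixed_conj Y _ _
        have h1'' : markD R X (⟨twistedDiagonal R S (α.trans e), isTD_twistedDiagonal R S (α.trans e)⟩ : Pt R H) ≠
            markD R Y (⟨twistedDiagonal R S (α.trans e), isTD_twistedDiagonal R S (α.trans e)⟩ : Pt R H) := by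
          rw [hmX, hmY]
          exact h1'
        obtain ⟨h, hh⟩ := huniq _ h1''
        have heq : twistedDiagonal R S (α.trans e) =
            (twistedDiagonal R S α).map (MulAut.conj (((1 : G), h) : G × H)).toMonoidHom :=
          congrArg Subtype.val hh
        have fact2 : ∀ u : S, ∃ w : S,
            (((α u : G), h * (u : H) * h⁻¹) : G × H) = (((α.trans e) w : G), (w : H)) := by
          intro u
          have hm : (((α u : G), h * (u : H) * h⁻¹) : G × H) ∈ twistedDiagonal R S (α.trans e) := by
            rw [heq]
            exact ⟨((α u : G), (u : H)), mem_tD.2 ⟨u, rfl⟩, by rw [conj_one_h]⟩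
          exact mem_tD.1 hm
        have fact1 : ∀ s : S, ∃ u : S,
            ((((α.trans e) s : G), (s : H)) : G × H) = ((α u : G), h * (u : H) * h⁻¹) := by
          intro s
          have hm : ((((α.trans e) s : G), (s : H)) : G × H) ∈
              (twistedDiagonal R S α).map (MulAut.conj (((1 : G), h) : G × H)).toMonoidHom := by
            rw [← heq]
            exact mem_tD.2 ⟨s, rfl⟩
          obtain ⟨q, hq, hqe⟩ := hm
          obtain ⟨u, rfl⟩ := mem_tD.1 hq
          rw [conj_one_h] at hqe
          exact ⟨u, hqe.symm⟩
        have hinv : h⁻¹ ∈ Subgroup.normalizer (S : Set H) := by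
          rw [Subgroup.mem_normalizer_iff]
          intro x
          constructor
          · intro hx
            obtain ⟨u, hu⟩ := fact1 ⟨x, hx⟩
            have hx2 : x = h * (u : H) * h⁻¹ := congrArg Prod.snd hu
            have hx3 : h⁻¹ * x * h⁻¹⁻¹ = (u : H) := by rw [hx2]; group
            rw [hx3]
            exact u.2
          · intro hx
            obtain ⟨w, hw⟩ := fact2 ⟨h⁻¹ * x * h⁻¹⁻¹, hx⟩
            have hsnd : h * (h⁻¹ * x * h⁻¹⁻¹) * h⁻¹ = (w : H) := congrArg Prod.snd hw
            have hx2 : x = (w : H) := by rw [← hsnd]; group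
            rw [hx2]
            exact w.2
        refine ⟨h⁻¹, hinv, ?_⟩
        intro s t hts
        obtain ⟨w, hw⟩ := fact2 t
        have hsnd : h * (t : H) * h⁻¹ = (w : H) := congrArg Prod.snd hw
        have hws : w = s := by
          apply Subtype.ext
          rw [← hsnd, hts]
          group
        have hfst : (α t : G) = ((α.trans e) w : G) := congrArg Prod.fst hw
        rw [hfst, hws]
        rfl
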